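/- Let M ∈ C^{n×n} be diagonalizable with M = Σ_i λ_i v_i w_i*, fix s ∈ C \ Spec(M), and let u ∈ C^n be such that u* v_i ≠ 0 for every i whose eigenvalue attains dist(s, Spec M). Then lim_{m→∞} ‖u*(s - M)^{-m}‖^{-1/m} = dist(s, Spec(M)). -/

import Mathlib

open Matrix

/-- Operator (ℓ²→ℓ²) norm of a complex matrix. -/
noncomputable def opNorm {m : Type*} [Fintype m] [DecidableEq m] (M : Matrix m m ℂ) : ℝ :=
  ‖LinearMap.toContinuousLinearMap (Matrix.toEuclideanLin M)‖

/-- Eigenvector condition number: infimum of `‖V‖‖V⁻¹‖` over diagonalizations `M = VDV⁻¹`. -/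
noncomputable def kappaV {n : ℕ} (M : Matrix (Fin n) (Fin n) ℂ) : ℝ :=
  sInf {x | ∃ V D : Matrix (Fin n) (Fin n) ℂ,
    IsUnit V ∧ D.IsDiag ∧ M = V * D * V⁻¹ ∧ x = opNorm V * opNorm V⁻¹}

/-- ℓ² norm of a vector. -/
noncomputable def vecNorm {n : ℕ} (x : Fin n → ℂ) : ℝ := Real.sqrt (∑ i, ‖x i‖ ^ 2)

open Filter in

lemma aux_tendsto (d a b : ℝ) (hd : 0 < d) (ha : 0 < a) (F : ℕ → ℝ)
    (hya : ∀ m, a ≤ F m * d ^ m) (hyb : ∀ m, F m * d ^ m ≤ b) :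
    Tendsto (fun m : ℕ => (F m) ^ (-(1:ℝ) / (m : ℝ))) atTop (nhds d) := by
  set y : ℕ → ℝ := fun m => F m * d ^ m with hy
  have hab : a ≤ b := le_trans (hya 0) (hyb 0)
  have hexp : Tendsto (fun m : ℕ => -1 / (m : ℝ)) atTop (nhds 0) :=
    tendsto_const_div_atTop_nhds_zero_nat (-1)
  have hlim : ∀ c : ℝ, 0 < c →
      Tendsto (fun m : ℕ => c ^ (-(1:ℝ) / (m : ℝ))) atTop (nhds 1) := by
    intro c hc
    have := (Real.continuousAt_const_rpow (b := (0:ℝ)) hc.ne').tendsto.comp hexp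
    rw [Real.rpow_zero] at this
    exact this.congr (fun m => by norm_num)
  have hA : Tendsto (fun m : ℕ => a ^ (-(1:ℝ) / (m : ℝ)) * d) atTop (nhds d) := by
    simpa using (hlim a ha).mul_const d
  have hB : Tendsto (fun m : ℕ => b ^ (-(1:ℝ) / (m : ℝ)) * d) atTop (nhds d) := by
    simpa using (hlim b (lt_of_lt_of_le ha hab)).mul_const d
  have key : ∀ m : ℕ, 1 ≤ m →
      (F m) ^ (-(1:ℝ) / (m : ℝ)) = (y m) ^ (-(1:ℝ) / (m : ℝ)) * d := by
    intro m hm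
    have hm0 : (m : ℝ) ≠ 0 := Nat.cast_ne_zero.mpr (by omega)
    have hdm : (0:ℝ) < d ^ m := pow_pos hd m
    have hFm : F m = y m * (d ^ m)⁻¹ := by
      field_simp [hy]
      rfl
    have hy0 : 0 ≤ y m := le_trans ha.le (hya m)
    rw [hFm, Real.mul_rpow hy0 (by positivity), Real.inv_rpow hdm.le,
      ← Real.rpow_natCast d m, ← Real.rpow_mul hd.le]
    have : (m : ℝ) * (-1 / (m : ℝ)) = -1 := by field_simp
    rw [this, Real.rpow_neg_one, inv_inv]
  apply tendsto_of_tendsto_of_tendsto_of_le_of_le' hB hA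
  · filter_upwards [eventually_ge_atTop 1] with m hm
    rw [key m hm]
    have hz : -(1:ℝ) / (m : ℝ) ≤ 0 :=
      div_nonpos_of_nonpos_of_nonneg (by norm_num) (Nat.cast_nonneg m)
    exact mul_le_mul_of_nonneg_right
      (Real.rpow_le_rpow_of_nonpos (lt_of_lt_of_le ha (hya m)) (hyb m) hz) hd.le
  · filter_upwards [eventually_ge_atTop 1] with m hm
    rw [key m hm]
    have hz : -(1:ℝ) / (m : ℝ) ≤ 0 :=
      div_nonpos_of_nonpos_of_nonneg (by norm_num) (Nat.cast_nonneg m)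
    exact mul_le_mul_of_nonneg_right
      (Real.rpow_le_rpow_of_nonpos ha (hya m) hz) hd.le

lemma conj_pow_aux {n : ℕ} (V A : Matrix (Fin n) (Fin n) ℂ)
    (hVV : V * V⁻¹ = 1) (hWV : V⁻¹ * V = 1) (m : ℕ) :
    (V * A * V⁻¹) ^ m = V * A ^ m * V⁻¹ := by
  induction m with
  | zero => simp [hVV]
  | succ m ih =>
    rw [pow_succ, ih, pow_succ]
    simp only [mul_assoc]
    rw [← mul_assoc V⁻¹ V, hWV, one_mul]

/-- unshifted inverse iteration computes the distance to the spectrum.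
Let `M = V D V⁻¹ = Σ λ_i v_i w_i*` (so `v_i` are the columns of `V` and `w_i*` the rows
of `V⁻¹`), `s ∉ Spec M`, and `u ∈ ℂⁿ` with `u* v_i ≠ 0` for every `i` whose eigenvalue
attains `dist(s, Spec M)`. Then `‖u*(s - M)^{-m}‖^{-1/m} → dist(s, Spec M)` as `m → ∞`. -/
theorem stmt_12 (n : ℕ) (hn : 0 < n) (M V D : Matrix (Fin n) (Fin n) ℂ)
    (hV : IsUnit V) (hD : D.IsDiag) (hM : M = V * D * V⁻¹)
    (s : ℂ) (hs : s ∉ spectrum ℂ M)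
    (u : Fin n → ℂ)
    (hu : ∀ i : Fin n, ‖s - D i i‖ = Metric.infDist s (spectrum ℂ M) →
      (∑ k, (starRingEnd ℂ) (u k) * V k i) ≠ 0) :
    Filter.Tendsto (fun m : ℕ =>
        (vecNorm (Matrix.vecMul (fun k => (starRingEnd ℂ) (u k))
          (((s • (1 : Matrix (Fin n) (Fin n) ℂ) - M)⁻¹) ^ m))) ^ (-(1 : ℝ) / (m : ℝ)))
      Filter.atTop (nhds (Metric.infDist s (spectrum ℂ M))) := by
  classical
  haveI : Nonempty (Fin n) := Fin.pos_iff_nonempty.mp hn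
  have hVdet : IsUnit V.det := (Matrix.isUnit_iff_isUnit_det V).mp hV
  have hVV : V * V⁻¹ = 1 := Matrix.mul_nonsing_inv V hVdet
  have hWV : V⁻¹ * V = 1 := Matrix.nonsing_inv_mul V hVdet
  set f : Fin n → ℂ := fun i => D i i with hf
  have hDdiag : D = Matrix.diagonal f := by
    ext i j
    rcases eq_or_ne i j with h | h
    · subst h; simp [hf]
    · rw [Matrix.diagonal_apply_ne _ h]; exact hD h
  have hconj : ∀ lam : ℂ, lam • (1 : Matrix (Fin n) (Fin n) ℂ) - M
      = V * Matrix.diagonal (fun i => lam - f i) * V⁻¹ := by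
    intro lam
    have h1 : lam • (1 : Matrix (Fin n) (Fin n) ℂ) = V * (lam • 1) * V⁻¹ := by
      rw [Matrix.mul_smul, Matrix.mul_one, Matrix.smul_mul, hVV]
    rw [hM, h1, ← Matrix.sub_mul, ← Matrix.mul_sub, hDdiag,
      Matrix.smul_one_eq_diagonal, Matrix.diagonal_sub]
  have hdetconj : ∀ X : Matrix (Fin n) (Fin n) ℂ, IsUnit (V * X * V⁻¹) ↔ IsUnit X := by
    intro X
    have h1 : V.det * V⁻¹.det = 1 := by rw [← Matrix.det_mul, hVV, Matrix.det_one]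
    have h2 : V.det ≠ 0 := left_ne_zero_of_mul_eq_one h1
    have h3 : V⁻¹.det ≠ 0 := right_ne_zero_of_mul_eq_one h1
    rw [Matrix.isUnit_iff_isUnit_det, Matrix.isUnit_iff_isUnit_det X,
      Matrix.det_mul, Matrix.det_mul]
    simp [isUnit_iff_ne_zero, h2, h3]
  have hspec : spectrum ℂ M = Set.range f := by
    ext lam
    rw [spectrum.mem_iff, Algebra.algebraMap_eq_smul_one, hconj lam, hdetconj,
      Matrix.isUnit_iff_isUnit_det, Matrix.det_diagonal]
    simp only [isUnit_iff_ne_zero, Finset.prod_ne_zero_iff, Finset.mem_univ, true_implies,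
      sub_ne_zero, not_forall, not_not, Set.mem_range]
    exact ⟨fun ⟨i, h⟩ => ⟨i, h.symm⟩, fun ⟨i, h⟩ => ⟨i, h.symm⟩⟩
  -- minimizer
  obtain ⟨i0, -, hmin⟩ := Finset.exists_min_image Finset.univ
    (fun i => ‖s - f i‖) ⟨Classical.arbitrary (Fin n), Finset.mem_univ _⟩
  have hsne : ∀ i, s - f i ≠ 0 := by
    intro i
    rw [sub_ne_zero]
    intro h
    exact hs (hspec ▸ ⟨i, h.symm⟩)
  have hd_eq : Metric.infDist s (spectrum ℂ M) = ‖s - f i0‖ := by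
    apply le_antisymm
    · have hmem : f i0 ∈ spectrum ℂ M := by rw [hspec]; exact Set.mem_range_self i0
      have h := Metric.infDist_le_dist_of_mem (x := s) hmem
      rwa [Complex.dist_eq] at h
    · by_contra hlt
      rw [not_le, hspec, Metric.infDist_lt_iff ⟨f i0, Set.mem_range_self i0⟩] at hlt
      obtain ⟨y, ⟨i, rfl⟩, hy⟩ := hlt
      rw [Complex.dist_eq] at hy
      exact absurd hy (not_lt.mpr (hmin i (Finset.mem_univ i)))
  have hd_pos : 0 < Metric.infDist s (spectrum ℂ M) := by
    rw [hd_eq]; exact norm_pos_iff.mpr (hsne i0)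
  set dd : ℝ := Metric.infDist s (spectrum ℂ M) with hdd
  have hd_le : ∀ i, dd ≤ ‖s - f i‖ := by
    intro i; rw [hd_eq]; exact hmin i (Finset.mem_univ i)
  -- powers of the resolvent
  have hNm : ∀ m : ℕ, ((s • (1 : Matrix (Fin n) (Fin n) ℂ) - M)⁻¹) ^ m
      = V * Matrix.diagonal (fun i => (s - f i)⁻¹ ^ m) * V⁻¹ := by
    intro m
    have hN : (s • (1 : Matrix (Fin n) (Fin n) ℂ) - M)⁻¹
        = V * Matrix.diagonal (fun i => (s - f i)⁻¹) * V⁻¹ := by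
      have hEinv : (Matrix.diagonal (fun i => s - f i))⁻¹
          = Matrix.diagonal (fun i => (s - f i)⁻¹) := by
        apply Matrix.inv_eq_right_inv
        rw [Matrix.diagonal_mul_diagonal]
        convert Matrix.diagonal_one with i
        exact mul_inv_cancel₀ (hsne i)
      rw [hconj s, Matrix.mul_inv_rev, Matrix.mul_inv_rev,
        Matrix.nonsing_inv_nonsing_inv V hVdet, hEinv, ← mul_assoc]
    rw [hN, conj_pow_aux V _ hVV hWV, Matrix.diagonal_pow]
    rfl
  -- vecMul computations
  set cu : Fin n → ℂ := fun k => (starRingEnd ℂ) (u k) with hcu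
  set c : Fin n → ℂ := Matrix.vecMul cu V with hc
  set W : Matrix (Fin n) (Fin n) ℂ := V⁻¹ with hWdef
  set r : ℕ → Fin n → ℂ := fun m => Matrix.vecMul cu
    (((s • (1 : Matrix (Fin n) (Fin n) ℂ) - M)⁻¹) ^ m) with hrdef
  have hr : ∀ m, r m = Matrix.vecMul (fun i => c i * (s - f i)⁻¹ ^ m) W := by
    intro m
    rw [hrdef]
    simp only
    rw [hNm m, ← Matrix.vecMul_vecMul, ← Matrix.vecMul_vecMul]
    have h2 : Matrix.vecMul (Matrix.vecMul cu V) (Matrix.diagonal fun i => (s - f i)⁻¹ ^ m)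
        = fun i => c i * (s - f i)⁻¹ ^ m := by
      funext i; rw [Matrix.vecMul_diagonal, hc]
    rw [h2]
  have hx : ∀ m : ℕ, (fun i => c i * (s - f i)⁻¹ ^ m) = Matrix.vecMul (r m) V := by
    intro m
    rw [hr m, Matrix.vecMul_vecMul, hWdef, hWV, Matrix.vecMul_one]
  have hc0 : c i0 ≠ 0 := by
    have h := hu i0 hd_eq.symm
    exact h
  -- entrywise bound of the ℓ² norm
  have hentry : ∀ (x : Fin n → ℂ) (j : Fin n), ‖x j‖ ≤ vecNorm x := by
    intro x j
    have h1 : ‖x j‖ = Real.sqrt (‖x j‖ ^ 2) := by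
      rw [Real.sqrt_sq (norm_nonneg _)]
    rw [h1, vecNorm]
    exact Real.sqrt_le_sqrt (Finset.single_le_sum
      (fun i _ => sq_nonneg ‖x i‖) (Finset.mem_univ j))
  set K : ℝ := ∑ j, ‖V j i0‖ with hKdef
  have hlow : ∀ m : ℕ, ‖c i0‖ * (dd⁻¹) ^ m ≤ vecNorm (r m) * K := by
    intro m
    have h1 : ‖c i0‖ * (dd⁻¹) ^ m
        = ‖(fun i => c i * (s - f i)⁻¹ ^ m) i0‖ := by
      simp only [norm_mul, norm_pow, norm_inv]
      rw [hd_eq]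
    rw [h1, hx m]
    have h2 : (Matrix.vecMul (r m) V) i0 = ∑ j, r m j * V j i0 := rfl
    rw [h2]
    calc ‖∑ j, r m j * V j i0‖
        ≤ ∑ j, ‖r m j * V j i0‖ := norm_sum_le _ _
      _ = ∑ j, ‖r m j‖ * ‖V j i0‖ := by simp [_root_.map_mul]
      _ ≤ ∑ j, vecNorm (r m) * ‖V j i0‖ :=
          Finset.sum_le_sum fun j _ => mul_le_mul_of_nonneg_right
            (hentry _ j) (norm_nonneg _)
      _ = vecNorm (r m) * K := by rw [hKdef, Finset.mul_sum]
  set Cb : ℝ := Real.sqrt (∑ j, (∑ i, ‖c i‖ * ‖W i j‖) ^ 2) with hCb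
  have hBnn : ∀ j, (0:ℝ) ≤ ∑ i, ‖c i‖ * ‖W i j‖ := by
    intro j
    exact Finset.sum_nonneg fun i _ =>
      mul_nonneg (norm_nonneg _) (norm_nonneg _)
  have hup : ∀ m : ℕ, vecNorm (r m) ≤ (dd⁻¹) ^ m * Cb := by
    intro m
    have hpt : ∀ j, ‖r m j‖
        ≤ (dd⁻¹) ^ m * ∑ i, ‖c i‖ * ‖W i j‖ := by
      intro j
      have h2 : r m j = ∑ i, (c i * (s - f i)⁻¹ ^ m) * W i j := by rw [hr m]; rfl
      rw [h2]
      calc ‖∑ i, (c i * (s - f i)⁻¹ ^ m) * W i j‖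
          ≤ ∑ i, ‖(c i * (s - f i)⁻¹ ^ m) * W i j‖ := norm_sum_le _ _
        _ = ∑ i, ‖c i‖ * ((‖s - f i‖)⁻¹) ^ m * ‖W i j‖ := by
            simp [_root_.map_mul, map_pow, map_inv₀]
        _ ≤ ∑ i, ‖c i‖ * (dd⁻¹) ^ m * ‖W i j‖ := by
            refine Finset.sum_le_sum fun i _ => ?_
            refine mul_le_mul_of_nonneg_right (mul_le_mul_of_nonneg_left
              (pow_le_pow_left₀ (inv_nonneg.mpr (norm_nonneg _)) ?_ m)
              (norm_nonneg _)) (norm_nonneg _)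
            exact inv_anti₀ hd_pos (hd_le i)
        _ = (dd⁻¹) ^ m * ∑ i, ‖c i‖ * ‖W i j‖ := by
            rw [Finset.mul_sum]; congr 1; funext i; ring
    have hnn : (0:ℝ) ≤ (dd⁻¹) ^ m := pow_nonneg (inv_nonneg.mpr hd_pos.le) m
    rw [vecNorm, hCb]
    have h3 : ∀ j, ‖r m j‖ ^ 2
        ≤ ((dd⁻¹) ^ m) ^ 2 * (∑ i, ‖c i‖ * ‖W i j‖) ^ 2 := by
      intro j
      rw [← mul_pow]
      refine pow_le_pow_left₀ (norm_nonneg _) ?_ 2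
      exact hpt j
    calc Real.sqrt (∑ j, ‖r m j‖ ^ 2)
        ≤ Real.sqrt (∑ j, ((dd⁻¹) ^ m) ^ 2
            * (∑ i, ‖c i‖ * ‖W i j‖) ^ 2) :=
          Real.sqrt_le_sqrt (Finset.sum_le_sum fun j _ => h3 j)
      _ = (dd⁻¹) ^ m * Real.sqrt (∑ j, (∑ i, ‖c i‖ * ‖W i j‖) ^ 2) := by
          rw [← Finset.mul_sum, Real.sqrt_mul (sq_nonneg _), Real.sqrt_sq hnn]
  -- assemble
  have habs : 0 < ‖c i0‖ := norm_pos_iff.mpr hc0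
  have hK0 : 0 ≤ K := Finset.sum_nonneg fun j _ => norm_nonneg _
  have hKpos : 0 < K := by
    rcases hK0.lt_or_eq with h | h
    · exact h
    · exfalso
      have h0 := hlow 0
      rw [pow_zero, mul_one, ← h, mul_zero] at h0
      exact absurd h0 (not_le.mpr habs)
  have ha : 0 < ‖c i0‖ / K := div_pos habs hKpos
  have hya : ∀ m : ℕ, ‖c i0‖ / K ≤ vecNorm (r m) * dd ^ m := by
    intro m
    rw [div_le_iff₀ hKpos]
    have h := mul_le_mul_of_nonneg_right (hlow m) (pow_nonneg hd_pos.le m)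
    rw [mul_assoc, ← mul_pow, inv_mul_cancel₀ hd_pos.ne', one_pow, mul_one] at h
    calc ‖c i0‖ ≤ vecNorm (r m) * K * dd ^ m := h
      _ = vecNorm (r m) * dd ^ m * K := by ring
  have hyb : ∀ m : ℕ, vecNorm (r m) * dd ^ m ≤ Cb := by
    intro m
    have h := mul_le_mul_of_nonneg_right (hup m) (pow_nonneg hd_pos.le m)
    calc vecNorm (r m) * dd ^ m ≤ (dd⁻¹) ^ m * Cb * dd ^ m := h
      _ = Cb * ((dd⁻¹ * dd) ^ m) := by rw [mul_pow]; ring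
      _ = Cb := by rw [inv_mul_cancel₀ hd_pos.ne', one_pow, mul_one]
  exact aux_tendsto dd (‖c i0‖ / K) Cb hd_pos ha
    (fun m => vecNorm (r m)) hya hyb
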